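/- (Theorem 2.1.) Let p, n ≥ 1, let x₁, …, xₙ ∈ ℝ^p with nonnegative weights w₁, …, wₙ satisfying n_w = Σᵢ wᵢ > 1, and let x ∈ ℝ^p be an arbitrary point. Let μ_w = (1/n_w) Σᵢ wᵢ xᵢ and Σ_w = (1/(n_w − 1)) Σᵢ wᵢ (xᵢ − μ_w)(xᵢ − μ_w)ᵀ; assume Σ_w is invertible and x ≠ μ_w. For ε > 0 define n_{w,ε} = n_w + ε, μ_{w,ε} = (1/n_{w,ε})(Σᵢ wᵢ xᵢ + ε x), let y_{w,ε} = e_{n+1} ∈ ℝ^{n+1}, and let X_{w,ε} be the (n+1)×p matrix with rows √wᵢ (xᵢ − μ_{w,ε})ᵀ for i = 1, …, n and last row √ε (x − μ_{w,ε})ᵀ. Suppose there is ε₀ > 0 such that for every ε ∈ (0, ε₀) the matrix X_{w,ε}ᵀ X_{w,ε} is invertible, and let θ_ε = (X_{w,ε}ᵀ X_{w,ε})⁻¹ X_{w,ε}ᵀ y_{w,ε} denote the unique minimizer of β ↦ ‖y_{w,ε} − X_{w,ε} β‖² over β ∈ ℝ^p. Then the direction of maximal outlyingness satisfies a(x) :=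 Σ_w⁻¹(x − μ_w)/‖Σ_w⁻¹(x − μ_w)‖ = lim_{ε → 0⁺} θ_ε / ‖θ_ε‖ (in particular θ_ε ≠ 0 for small ε and the limit exists). -/

import Mathlib

open Matrix Filter Topology

set_option maxHeartbeats 1000000

lemma norm_smul_aux {p : ℕ} (c : ℝ) (hc : 0 < c) (v : Fin p → ℝ) :
    (Real.sqrt ((c • v) ⬝ᵥ (c • v)))⁻¹ • (c • v) = (Real.sqrt (v ⬝ᵥ v))⁻¹ • v := by
  have hd : (c • v) ⬝ᵥ (c • v) = c ^ 2 * (v ⬝ᵥ v) := by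
    simp [smul_dotProduct, dotProduct_smul, smul_eq_mul]; ring
  rw [hd, Real.sqrt_mul (sq_nonneg c), Real.sqrt_sq hc.le, mul_inv, smul_smul]
  congr 1
  field_simp


/-- Theorem 2.1: the direction of maximal outlyingness
`a(x) = Σ_w⁻¹(x − μ_w)/‖Σ_w⁻¹(x − μ_w)‖` is the limit, as `ε → 0⁺`, of the
normalized least-squares solutions `θ_ε/‖θ_ε‖` of the regression of
`y_{w,ε} = e_{n+1}` on the weighted, centred, augmented data matrix
`X_{w,ε}`; in particular `θ_ε ≠ 0` for small `ε > 0` and the limit exists. -/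
theorem direction_of_maximal_outlyingness_eq_lim_normalized_least_squares
    (p n : ℕ) (hp : 1 ≤ p) (hn : 1 ≤ n)
    (xs : Fin n → Fin p → ℝ) (w : Fin n → ℝ) (hw : ∀ i, 0 ≤ w i)
    (hnw : 1 < ∑ i, w i) (x : Fin p → ℝ)
    (μw : Fin p → ℝ) (hμw : μw = (1 / ∑ i, w i) • ∑ i, w i • xs i)
    (Sw : Matrix (Fin p) (Fin p) ℝ)
    (hSw : Sw = (1 / (∑ i, w i - 1)) •
      ∑ i, w i • vecMulVec (xs i - μw) (xs i - μw))
    (hSwinv : IsUnit Sw) (hxμ : x ≠ μw)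
    (μ : ℝ → Fin p → ℝ)
    (hμ : ∀ ε : ℝ, μ ε = (1 / (∑ i, w i + ε)) • (∑ i, w i • xs i + ε • x))
    (y : Fin (n + 1) → ℝ) (hy : y = Pi.single (Fin.last n) 1)
    (X : ℝ → Matrix (Fin (n + 1)) (Fin p) ℝ)
    (hX : ∀ ε : ℝ, X ε = Matrix.of fun i j =>
      Fin.lastCases (Real.sqrt ε * (x j - μ ε j))
        (fun k => Real.sqrt (w k) * (xs k j - μ ε j)) i)
    (ε₀ : ℝ) (hε₀ : 0 < ε₀)
    (hgram : ∀ ε : ℝ, 0 < ε → ε < ε₀ → IsUnit ((X ε)ᵀ * X ε))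
    (θ : ℝ → Fin p → ℝ)
    (hθ : ∀ ε : ℝ, θ ε = ((X ε)ᵀ * X ε)⁻¹ *ᵥ ((X ε)ᵀ *ᵥ y)) :
    (∃ ε₁ : ℝ, 0 < ε₁ ∧ ∀ ε : ℝ, 0 < ε → ε < ε₁ → θ ε ≠ 0) ∧
    Tendsto (fun ε : ℝ => (Real.sqrt (θ ε ⬝ᵥ θ ε))⁻¹ • θ ε) (𝓝[>] 0)
      (𝓝 ((Real.sqrt ((Sw⁻¹ *ᵥ (x - μw)) ⬝ᵥ (Sw⁻¹ *ᵥ (x - μw))))⁻¹ •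
        (Sw⁻¹ *ᵥ (x - μw)))) := by
  set nw : ℝ := ∑ i, w i with hnwdef
  have hnw1 : (0:ℝ) < nw - 1 := by linarith
  have hnwpos : (0:ℝ) < nw := by linarith
  -- G' : the Gram matrix expressed algebraically
  set G' : ℝ → Matrix (Fin p) (Fin p) ℝ := fun ε =>
    (∑ k, w k • vecMulVec (xs k - μ ε) (xs k - μ ε))
      + ε • vecMulVec (x - μ ε) (x - μ ε) with hG'def
  have hμ0 : μ 0 = μw := by
    rw [hμ, hμw]; simp
  have hG'0 : G' 0 = (nw - 1) • Sw := by
    have : (∑ k, w k • vecMulVec (xs k - μw) (xs k - μw)) = (nw - 1) • Sw := by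
      rw [hSw, smul_smul, mul_one_div, div_self hnw1.ne', one_smul]
    simp [hG'def, hμ0, this]
  -- the Gram matrix equals G' for ε > 0
  have hmulself : ∀ a : ℝ, 0 ≤ a → ∀ u v : ℝ,
      (Real.sqrt a * u) * (Real.sqrt a * v) = a * (u * v) := by
    intro a ha u v
    rw [show (Real.sqrt a * u) * (Real.sqrt a * v)
      = (Real.sqrt a * Real.sqrt a) * (u * v) by ring, Real.mul_self_sqrt ha]
  have hgram' : ∀ ε : ℝ, 0 ≤ ε → (X ε)ᵀ * X ε = G' ε := by
    intro ε hε
    ext i j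
    rw [hX]
    simp only [Matrix.mul_apply, Matrix.transpose_apply, Matrix.of_apply]
    rw [Fin.sum_univ_castSucc]
    simp only [Fin.lastCases_castSucc, Fin.lastCases_last]
    simp only [hG'def, Matrix.add_apply, Matrix.smul_apply, Matrix.sum_apply,
      vecMulVec_apply, smul_eq_mul, Pi.sub_apply]
    congr 1
    · exact Finset.sum_congr rfl fun k _ => hmulself (w k) (hw k) _ _
    · exact hmulself ε hε _ _
  have hXty : ∀ ε : ℝ, (X ε)ᵀ *ᵥ y = Real.sqrt ε • (x - μ ε) := by
    intro ε
    ext j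
    rw [hX, hy]
    simp [Matrix.mulVec, dotProduct, Pi.single_apply, mul_ite, Finset.sum_ite_eq',
      Matrix.transpose_apply]
  set f : ℝ → Fin p → ℝ := fun ε => (G' ε)⁻¹ *ᵥ (x - μ ε) with hfdef
  have hθf : ∀ ε : ℝ, 0 < ε → ε < ε₀ → θ ε = Real.sqrt ε • f ε := by
    intro ε h1 h2
    rw [hθ, hgram' ε h1.le, hXty, mulVec_smul]
  -- determinant of G' 0 is a unit
  have hdetSw : IsUnit Sw.det := (Matrix.isUnit_iff_isUnit_det Sw).mp hSwinv
  have hdetSw' : Sw.det ≠ 0 := by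
    simpa [isUnit_iff_ne_zero] using hdetSw
  have hdet0 : (G' 0).det ≠ 0 := by
    rw [hG'0, Matrix.det_smul]
    exact mul_ne_zero (pow_ne_zero _ hnw1.ne') hdetSw'
  -- continuity of μ at 0
  have hμc : ContinuousAt μ 0 := by
    have hμfun : μ = fun ε => (1 / (nw + ε)) • ((∑ i, w i • xs i) + ε • x) := funext hμ
    rw [hμfun]
    apply ContinuousAt.fun_smul
    · exact (continuousAt_const.div (continuousAt_const.add continuousAt_id)
        (by simpa using hnwpos.ne'))
    · exact continuousAt_const.add (continuousAt_id.smul continuousAt_const)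
  -- continuity of G' at 0
  have hG'c : ContinuousAt G' 0 := by
    have hΦ : Continuous (fun q : ℝ × (Fin p → ℝ) =>
        (∑ k, w k • vecMulVec (xs k - q.2) (xs k - q.2))
          + q.1 • vecMulVec (x - q.2) (x - q.2)) := by
      apply Continuous.add
      · exact continuous_finset_sum _ fun k _ => Continuous.fun_const_smul
          ((Continuous.matrix_vecMulVec (continuous_const.sub continuous_snd)
            (continuous_const.sub continuous_snd))) _
      · exact Continuous.smul continuous_fst
          (Continuous.matrix_vecMulVec (continuous_const.sub continuous_snd)
            (continuous_const.sub continuous_snd))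
    rw [hG'def]
    have h2 : ContinuousAt (fun ε : ℝ => (ε, μ ε)) 0 := continuousAt_id.prodMk hμc
    exact ContinuousAt.comp (f := fun ε : ℝ => (ε, μ ε)) hΦ.continuousAt h2
  -- continuity of f at 0
  have hinvc : ContinuousAt (fun ε : ℝ => (G' ε)⁻¹) 0 := by
    refine ContinuousAt.comp ?_ hG'c
    refine continuousAt_matrix_inv _ ?_
    rw [Ring.inverse_eq_inv']
    exact continuousAt_inv₀ hdet0
  have hfc : ContinuousAt f 0 := by
    have hΨ : Continuous (fun q : Matrix (Fin p) (Fin p) ℝ × (Fin p → ℝ) => q.1 *ᵥ q.2) :=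
      Continuous.matrix_mulVec continuous_fst continuous_snd
    rw [hfdef]
    have h2 : ContinuousAt (fun ε : ℝ => ((G' ε)⁻¹, x - μ ε)) 0 :=
      hinvc.prodMk (continuousAt_const.sub hμc)
    exact ContinuousAt.comp (f := fun ε : ℝ => ((G' ε)⁻¹, x - μ ε)) hΨ.continuousAt h2
  -- value of f at 0
  set v0 : Fin p → ℝ := Sw⁻¹ *ᵥ (x - μw) with hv0def
  have hf0 : f 0 = (nw - 1)⁻¹ • v0 := by
    have hSmul : ((nw - 1) • Sw)⁻¹ = (nw - 1)⁻¹ • Sw⁻¹ := by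
      have := Matrix.inv_smul' (Units.mk0 (nw - 1) hnw1.ne') hdetSw (A := Sw)
      simpa [Units.smul_def, Units.val_inv_eq_inv_val, Units.val_mk0] using this
    rw [hfdef]
    simp only [hG'0, hμ0, hSmul, Matrix.smul_mulVec, hv0def]
  have hv0ne : v0 ≠ 0 := by
    intro h
    have h1 : Sw *ᵥ v0 = x - μw := by
      rw [hv0def, Matrix.mulVec_mulVec, Matrix.mul_nonsing_inv _ hdetSw, Matrix.one_mulVec]
    rw [h, Matrix.mulVec_zero] at h1
    exact hxμ (sub_eq_zero.mp h1.symm)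
  have hf0ne : f 0 ≠ 0 := by
    rw [hf0]
    exact smul_ne_zero (inv_ne_zero hnw1.ne') hv0ne
  -- f tends to f 0 along 𝓝[>] 0
  have hftend : Tendsto f (𝓝[>] (0:ℝ)) (𝓝 (f 0)) :=
    hfc.continuousWithinAt.tendsto
  have hevIoo : ∀ᶠ ε in 𝓝[>] (0:ℝ), 0 < ε ∧ ε < ε₀ := by
    filter_upwards [Ioo_mem_nhdsGT_of_mem (by constructor <;> [exact le_refl 0; exact hε₀] :
      (0:ℝ) ∈ Set.Ico 0 ε₀)] with ε hε
    exact ⟨hε.1, hε.2⟩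
  have hfne : ∀ᶠ ε in 𝓝[>] (0:ℝ), f ε ≠ 0 := hftend.eventually_ne hf0ne
  constructor
  · -- θ ε ≠ 0 for small ε
    have hev : ∀ᶠ ε in 𝓝[>] (0:ℝ), θ ε ≠ 0 := by
      filter_upwards [hevIoo, hfne] with ε h1 h2
      rw [hθf ε h1.1 h1.2]
      exact smul_ne_zero (Real.sqrt_ne_zero'.mpr h1.1) h2
    rcases mem_nhdsGT_iff_exists_Ioo_subset.mp hev with ⟨u, hu, hsub⟩
    exact ⟨u, hu, fun ε h1 h2 => hsub ⟨h1, h2⟩⟩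
  · -- the limit
    have hdot : Tendsto (fun ε => f ε ⬝ᵥ f ε) (𝓝[>] (0:ℝ)) (𝓝 (f 0 ⬝ᵥ f 0)) := by
      have hcont : Continuous (fun v : Fin p → ℝ => v ⬝ᵥ v) := by
        unfold dotProduct
        exact continuous_finset_sum _ fun i _ => (continuous_apply i).mul (continuous_apply i)
      exact (hcont.continuousAt.comp_continuousWithinAt hfc.continuousWithinAt).tendsto
    have hsne : Real.sqrt (f 0 ⬝ᵥ f 0) ≠ 0 := by
      rw [Real.sqrt_ne_zero']
      rcases lt_or_eq_of_le (Finset.sum_nonneg fun i _ => mul_self_nonneg (f 0 i) :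
        (0:ℝ) ≤ f 0 ⬝ᵥ f 0) with h | h
      · exact h
      · exact absurd (dotProduct_self_eq_zero.mp h.symm) hf0ne
    have hNf : Tendsto (fun ε => (Real.sqrt (f ε ⬝ᵥ f ε))⁻¹ • f ε) (𝓝[>] (0:ℝ))
        (𝓝 ((Real.sqrt (f 0 ⬝ᵥ f 0))⁻¹ • f 0)) := by
      refine Tendsto.smul ?_ hftend
      exact Tendsto.inv₀ (Real.continuous_sqrt.continuousAt.tendsto.comp hdot) hsne
    have hval : (Real.sqrt (f 0 ⬝ᵥ f 0))⁻¹ • f 0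
        = (Real.sqrt (v0 ⬝ᵥ v0))⁻¹ • v0 := by
      rw [hf0]
      exact norm_smul_aux _ (inv_pos.mpr hnw1) v0
    refine Tendsto.congr' ?_ (hval ▸ hNf)
    filter_upwards [hevIoo] with ε h1
    rw [hθf ε h1.1 h1.2]
    exact (norm_smul_aux _ (Real.sqrt_pos.mpr h1.1) (f ε)).symm
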